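/- Let d ∈ ℕ, τ ∈ ℝ, σ > 0 and α ∈ (0,1). Then for any n ∈ ℕ, sup over P ∈ P_Mon,d(σ) of the inf over Â ∈ Â_n(τ, α, P_Mon,d(σ)) of E_P μ(X_τ(η) \ Â(D)) is at least 1 − α, where μ and η denote the covariate marginal and regression function of P and D ∼ P^n. -/

import Mathlib

open MeasureTheory ProbabilityTheory Real Set
open scoped ENNReal Classical

noncomputable section

/-- `log_+ x := log (x ∨ e)`. -/
def logp (x : ℝ) : ℝ := Real.log (max x (Real.exp 1))

/-- The σ-algebra generated by the covariate `X = Prod.fst`. -/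
def mX (d : ℕ) : MeasurableSpace ((Fin d → ℝ) × ℝ) :=
  MeasurableSpace.comap Prod.fst inferInstance

/-- `η` is (a version of) the regression function `x ↦ E[Y | X = x]` of `P`. -/
def IsRegFn (d : ℕ) (P : Measure ((Fin d → ℝ) × ℝ)) (η : (Fin d → ℝ) → ℝ) : Prop :=
  Measurable η ∧ (fun p => η p.1) =ᵐ[P] P[fun p => p.2 | mX d]

/-- Conditionally on `X`, `Y - η X` is sub-Gaussian with variance parameter `σ²`. -/
def CondSubG (d : ℕ) (σ : ℝ) (P : Measure ((Fin d → ℝ) × ℝ)) (η : (Fin d → ℝ) → ℝ) : Prop :=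
  ∀ t : ℝ, Integrable (fun p => Real.exp (t * (p.2 - η p.1))) P ∧
    (P[fun p => Real.exp (t * (p.2 - η p.1)) | mX d])
      ≤ᵐ[P] fun _ => Real.exp (σ ^ 2 * t ^ 2 / 2)

/-- The class `P_{Mon,d}(σ)`, as a predicate on the pair `(P, η)`. -/
def PMon (d : ℕ) (σ : ℝ) (P : Measure ((Fin d → ℝ) × ℝ)) (η : (Fin d → ℝ) → ℝ) : Prop :=
  IsProbabilityMeasure P ∧ IsRegFn d P η ∧ Monotone η ∧ CondSubG d σ P η

/-- The margin class `P_{Mar,d}(τ, β, ν)`, as a predicate on the pair `(P, η)`. -/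
def PMar (d : ℕ) (τ β ν : ℝ) (P : Measure ((Fin d → ℝ) × ℝ)) (η : (Fin d → ℝ) → ℝ) : Prop :=
  IsProbabilityMeasure P ∧ IsRegFn d P η ∧
    ∀ ξ : ℝ, ξ ∈ Set.Ioc (0 : ℝ) 1 →
      (P.map Prod.fst) (η ⁻¹' Set.Icc τ (τ + ν * ξ ^ β)) ≤ ENNReal.ofReal ξ

/-- Support of a Borel measure: the points all of whose open neighbourhoods have
positive measure. -/
def measSupport {α : Type*} [TopologicalSpace α] [MeasurableSpace α] (μ : Measure α) : Set α :=
  {x | ∀ U : Set α, IsOpen U → x ∈ U → 0 < μ U}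

/-- The regularity class `P_{Reg,d}(τ, θ, γ, λ)`, as a predicate on the pair `(P, η)`. -/
def PReg (d : ℕ) (τ θ γ lam : ℝ) (P : Measure ((Fin d → ℝ) × ℝ)) (η : (Fin d → ℝ) → ℝ) : Prop :=
  IsProbabilityMeasure P ∧ IsRegFn d P η ∧
    ∀ x ∈ {x | τ ≤ η x} ∩ measSupport (P.map Prod.fst), ∀ r : ℝ, r ∈ Set.Ioc (0:ℝ) 1 →
      (ENNReal.ofReal (θ⁻¹ * r ^ d) ≤ (P.map Prod.fst) (Metric.closedBall x r) ∧
        (P.map Prod.fst) (Metric.closedBall x r) ≤ ENNReal.ofReal (θ * (2 * r) ^ d)) ∧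
      (Metric.closedBall x r ∩ {z | τ + lam * r ^ γ ≤ η z}).Nonempty

/-- Indices `i` with `X i ≼ x`, ordered by increasing sup-norm distance to `x`,
ties broken by the original index ordering. -/
def nnOrder {d n : ℕ} (X : Fin n → (Fin d → ℝ)) (x : Fin d → ℝ) : List (Fin n) :=
  List.insertionSort
    (fun i j => ‖X i - x‖ < ‖X j - x‖ ∨ (‖X i - x‖ = ‖X j - x‖ ∧ i ≤ j))
    ((List.finRange n).filter (fun i => decide (X i ≤ x)))

/-- The martingale sums `S_k = ∑_{j=1}^k (Y_{(j)}(x) - τ)/σ`. -/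
def Smart {d n : ℕ} (σ τ : ℝ) (D : Fin n → (Fin d → ℝ) × ℝ) (x : Fin d → ℝ) (k : ℕ) : ℝ :=
  ((((nnOrder (fun i => (D i).1) x).take k).map (fun i => ((D i).2 - τ) / σ)).sum)

/-- The anytime-valid martingale p-value `p̂_{σ,τ}(x, D)`. -/
def phat {d n : ℕ} (σ τ : ℝ) (D : Fin n → (Fin d → ℝ) × ℝ) (x : Fin d → ℝ) : ℝ :=
  ((List.range (nnOrder (fun i => (D i).1) x).length).map (fun k =>
      5.2 * Real.exp (-(max (Smart σ τ D x (k + 1)) 0) ^ 2 / (2.0808 * (k + 1))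
        + Real.log (Real.log (2 * (k + 1))) / 0.72))).foldr min 1

/-- One iteration of the DAG testing procedure `R^ISS`. Edges point from parents to children:
`E a b` means `a` is a parent of `b`; `F` is the weight-one (polyforest) subrelation. -/
def RISSstep {I : Type*} [Fintype I] (E F : I → I → Prop) (α : ℝ) (p : I → ℝ)
    (R : Finset I) : Finset I :=
  let SL : Finset I := Finset.univ.filter (fun i => (∀ j, ¬ F i j) ∧ i ∉ R)
  let SC : Finset I := Finset.univ.filter (fun i => i ∉ R ∧ ∀ j, F j i → j ∈ R)
  let budget : I → ℝ := fun i =>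
    if i ∈ SC then
      ((SL.filter (fun j => j = i ∨ Relation.TransGen F i j)).card : ℝ) * α / (SL.card : ℝ)
    else 0
  let Il : Finset I := Finset.univ.filter (fun i => p i ≤ budget i)
  if Il = ∅ then R
  else R ∪ Il ∪ Finset.univ.filter (fun i => ∃ j ∈ Il, Relation.TransGen E i j)

/-- The DAG testing procedure `R^ISS_α` applied to a polyforest-weighted DAG `(I, E, w)`
(represented by the edge relation `E` and the weight-one subrelation `F`) and p-values `p`. -/
def RISS {I : Type*} [Fintype I] (E F : I → I → Prop) (α : ℝ) (p : I → ℝ) : Finset I :=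
  (RISSstep E F α p)^[Fintype.card I] ∅

/-- Edge relation of the DAG induced by the covariate points `z`. -/
def indE {d m : ℕ} (z : Fin m → (Fin d → ℝ)) (i0 i1 : Fin m) : Prop :=
  i0 ≠ i1 ∧ z i1 ≤ z i0 ∧ ∀ i2, z i1 ≤ z i2 → z i2 ≤ z i0 →
    (z i2 = z i0 ∧ i0 ≤ i2) ∨ (z i2 = z i1 ∧ i2 ≤ i1)

/-- Edge relation of the induced polyforest: among the induced-DAG parents of `i1`, keep the one
of minimal sup-norm distance to `z i1`, ties broken by smallest index. -/
def indF {d m : ℕ} (z : Fin m → (Fin d → ℝ)) (i0 i1 : Fin m) : Prop :=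
  indE z i0 i1 ∧ ∀ i, indE z i i1 →
    (‖z i0 - z i1‖ < ‖z i - z i1‖ ∨ (‖z i0 - z i1‖ = ‖z i - z i1‖ ∧ i0 ≤ i))

/-- The selection set `Â^{ISS}_{σ,τ,α,m}(D)`: the upper hull of the covariate points (among the
first `m` data points) whose hypotheses are rejected by `R^ISS` applied to the induced
polyforest-weighted DAG of `(X_1, …, X_m)` and the martingale p-values `p̂_{σ,τ}(X_i, D)`. -/
def AISS {d n : ℕ} (σ τ α : ℝ) (m : ℕ) (hm : m ≤ n)
    (D : Fin n → (Fin d → ℝ) × ℝ) : Set (Fin d → ℝ) :=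
  let z : Fin m → (Fin d → ℝ) := fun i => (D (Fin.castLE hm i)).1
  {x | ∃ i ∈ RISS (indE z) (indF z) α (fun i => phat σ τ D (z i)), z i ≤ x}

/-- `A` is a valid data-dependent selection set at level `α` for the class `PC`:
it is jointly measurable and satisfies the Type I error guarantee over `PC`. -/
def SelValid (d n : ℕ) (τ α : ℝ)
    (PC : Measure ((Fin d → ℝ) × ℝ) → ((Fin d → ℝ) → ℝ) → Prop)
    (A : (Fin n → (Fin d → ℝ) × ℝ) → Set (Fin d → ℝ)) : Prop :=
  MeasurableSet {q : (Fin n → (Fin d → ℝ) × ℝ) × (Fin d → ℝ) | q.2 ∈ A q.1} ∧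
  ∀ P η, PC P η →
    ENNReal.ofReal (1 - α) ≤ (Measure.pi fun _ : Fin n => P) {ω | A ω ⊆ {x | τ ≤ η x}}

end


noncomputable section AuxProof

open MeasureTheory

lemma mX_le' (d : ℕ) : mX d ≤ (inferInstance : MeasurableSpace ((Fin d → ℝ) × ℝ)) :=
  measurable_iff_comap_le.mp measurable_fst

lemma integrable_dirac'' {α : Type*} [MeasurableSpace α] [MeasurableSingletonClass α]
    (f : α → ℝ) (a : α) : Integrable f (Measure.dirac a) :=
  (integrable_const (f a)).congr (MeasureTheory.ae_eq_dirac f).symm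

lemma integrable_twoPoint {α : Type*} [MeasurableSpace α] [MeasurableSingletonClass α]
    (c₁ c₂ : ℝ) (a b : α) (f : α → ℝ) :
    Integrable f (ENNReal.ofReal c₁ • Measure.dirac a + ENNReal.ofReal c₂ • Measure.dirac b) :=
  ((integrable_dirac'' f a).smul_measure ENNReal.ofReal_ne_top).add_measure
    ((integrable_dirac'' f b).smul_measure ENNReal.ofReal_ne_top)

lemma integral_twoPoint {α : Type*} [MeasurableSpace α] [MeasurableSingletonClass α]
    {c₁ c₂ : ℝ} (h₁ : 0 ≤ c₁) (h₂ : 0 ≤ c₂) (a b : α) (f : α → ℝ) :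
    ∫ x, f x ∂(ENNReal.ofReal c₁ • Measure.dirac a + ENNReal.ofReal c₂ • Measure.dirac b)
      = c₁ * f a + c₂ * f b := by
  rw [integral_add_measure ((integrable_dirac'' f a).smul_measure ENNReal.ofReal_ne_top)
      ((integrable_dirac'' f b).smul_measure ENNReal.ofReal_ne_top),
    integral_smul_measure, integral_smul_measure, integral_dirac, integral_dirac,
    ENNReal.toReal_ofReal h₁, ENNReal.toReal_ofReal h₂]
  simp [smul_eq_mul]

lemma condexp_const_of_trivial {d : ℕ} {Q : Measure ((Fin d → ℝ) × ℝ)} [IsProbabilityMeasure Q]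
    (hQ : ∀ s, MeasurableSet[mX d] s → Q s = 0 ∨ Q sᶜ = 0)
    {f : (Fin d → ℝ) × ℝ → ℝ} (hf : Integrable f Q) :
    (fun _ => ∫ p, f p ∂Q) =ᵐ[Q] Q[f | mX d] := by
  refine ae_eq_condExp_of_forall_setIntegral_eq (mX_le' d) hf (fun s _ hs => ?_)
    (fun s hs _ => ?_) (StronglyMeasurable.aestronglyMeasurable stronglyMeasurable_const)
  · exact integrableOn_const hs.ne
  · rcases hQ s hs with h | h
    · rw [Measure.restrict_eq_zero.mpr h]
      simp
    · have hres : Q.restrict s = Q := by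
        apply Measure.restrict_eq_self_of_ae_mem
        rw [ae_iff]
        exact h
      rw [hres]
      simp

lemma mgf_two_point (σ ε t : ℝ) (hε0 : 0 ≤ ε) (hε1 : ε ≤ 1) :
    (1 - ε) * Real.exp (t * (ε * σ)) + ε * Real.exp (t * ((ε - 1) * σ))
      ≤ Real.exp (σ ^ 2 * t ^ 2 / 2) := by
  set s := t * σ with hs
  have key : ∀ z l : ℝ, 0 ≤ l → l ≤ 1 → z = l * s + (1 - l) * (-s) →
      Real.exp z ≤ l * Real.exp s + (1 - l) * Real.exp (-s) := by
    intro z l h0 h1 hz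
    have := convexOn_exp.2 (Set.mem_univ s) (Set.mem_univ (-s)) h0
      (by linarith : (0:ℝ) ≤ 1 - l) (by ring)
    simpa [hz, smul_eq_mul] using this
  have e1 : Real.exp (t * (ε * σ)) ≤
      ((1 + ε) / 2) * Real.exp s + (1 - (1 + ε) / 2) * Real.exp (-s) :=
    key _ _ (by linarith) (by linarith) (by rw [hs]; ring)
  have e2 : Real.exp (t * ((ε - 1) * σ)) ≤
      (ε / 2) * Real.exp s + (1 - ε / 2) * Real.exp (-s) :=
    key _ _ (by linarith) (by linarith) (by rw [hs]; ring)
  have h1 : (1 - ε) * Real.exp (t * (ε * σ)) + ε * Real.exp (t * ((ε - 1) * σ)) ≤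
      Real.cosh s := by
    have b1 := mul_le_mul_of_nonneg_left e1 (by linarith : (0:ℝ) ≤ 1 - ε)
    have b2 := mul_le_mul_of_nonneg_left e2 hε0
    rw [Real.cosh_eq]
    nlinarith [b1, b2]
  refine h1.trans ((Real.cosh_le_exp_half_sq s).trans (le_of_eq ?_))
  congr 1
  rw [hs]; ring

/-- The two-point mixture `(1-ε) δ_{(0,τ)} + ε δ_{(0,τ-σ)}`. -/
noncomputable def QQ (d : ℕ) (τ σ ε : ℝ) : Measure ((Fin d → ℝ) × ℝ) :=
  ENNReal.ofReal (1 - ε) • Measure.dirac (0, τ) + ENNReal.ofReal ε • Measure.dirac (0, τ - σ)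

lemma QQ_prob {d : ℕ} {τ σ ε : ℝ} (hε0 : 0 ≤ ε) (hε1 : ε ≤ 1) :
    IsProbabilityMeasure (QQ d τ σ ε) := by
  constructor
  simp only [QQ, Measure.coe_add, Measure.coe_smul, Pi.add_apply, Pi.smul_apply,
    measure_univ, smul_eq_mul, mul_one]
  rw [← ENNReal.ofReal_add (by linarith) hε0]
  norm_num

lemma QQ_trivial {d : ℕ} {τ σ ε : ℝ} :
    ∀ s, MeasurableSet[mX d] s → QQ d τ σ ε s = 0 ∨ QQ d τ σ ε sᶜ = 0 := by
  intro s hs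
  obtain ⟨B, hB, rfl⟩ := hs
  by_cases hx : (0 : Fin d → ℝ) ∈ B
  · right
    have h1 : (Measure.dirac ((0 : Fin d → ℝ), τ)) (Prod.fst ⁻¹' B)ᶜ = 0 := by
      rw [Measure.dirac_apply' _ (measurable_fst hB).compl]
      simpa using hx
    have h2 : (Measure.dirac ((0 : Fin d → ℝ), τ - σ)) (Prod.fst ⁻¹' B)ᶜ = 0 := by
      rw [Measure.dirac_apply' _ (measurable_fst hB).compl]
      simpa using hx
    simp [QQ, h1, h2]
  · left
    have h1 : (Measure.dirac ((0 : Fin d → ℝ), τ)) (Prod.fst ⁻¹' B) = 0 := by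
      rw [Measure.dirac_apply' _ (measurable_fst hB)]
      simpa using hx
    have h2 : (Measure.dirac ((0 : Fin d → ℝ), τ - σ)) (Prod.fst ⁻¹' B) = 0 := by
      rw [Measure.dirac_apply' _ (measurable_fst hB)]
      simpa using hx
    simp [QQ, h1, h2]

lemma QQ_map_fst {d : ℕ} {τ σ ε : ℝ} (hε0 : 0 ≤ ε) (hε1 : ε ≤ 1) :
    (QQ d τ σ ε).map Prod.fst = Measure.dirac (0 : Fin d → ℝ) := by
  rw [QQ, Measure.map_add _ _ measurable_fst, Measure.map_smul, Measure.map_smul,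
    Measure.map_dirac' measurable_fst, Measure.map_dirac' measurable_fst]
  show ENNReal.ofReal (1 - ε) • Measure.dirac (0 : Fin d → ℝ)
      + ENNReal.ofReal ε • Measure.dirac (0 : Fin d → ℝ) = _
  rw [← add_smul, ← ENNReal.ofReal_add (by linarith) hε0]
  norm_num

lemma QQ_PMon {d : ℕ} {τ σ ε : ℝ} (hσ : 0 < σ) (hε0 : 0 ≤ ε) (hε1 : ε ≤ 1) :
    PMon d σ (QQ d τ σ ε) (fun _ => τ - ε * σ) := by
  haveI : IsProbabilityMeasure (QQ d τ σ ε) := QQ_prob hε0 hε1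
  have hmean : ∫ p, p.2 ∂(QQ d τ σ ε) = τ - ε * σ := by
    rw [QQ, integral_twoPoint (by linarith) hε0]
    ring
  refine ⟨inferInstance, ⟨measurable_const, ?_⟩, monotone_const, ?_⟩
  · have hint : Integrable (fun p : (Fin d → ℝ) × ℝ => p.2) (QQ d τ σ ε) := by
      rw [QQ]; exact integrable_twoPoint _ _ _ _ _
    have h := condexp_const_of_trivial (QQ_trivial) hint
    rw [hmean] at h
    exact h
  · intro t
    have hint : Integrable (fun p : (Fin d → ℝ) × ℝ => Real.exp (t * (p.2 - (τ - ε * σ))))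
        (QQ d τ σ ε) := by
      rw [QQ]; exact integrable_twoPoint _ _ _ _ _
    refine ⟨hint, ?_⟩
    have h := condexp_const_of_trivial (QQ_trivial) hint
    have hval : ∫ p, Real.exp (t * (p.2 - (τ - ε * σ))) ∂(QQ d τ σ ε)
        ≤ Real.exp (σ ^ 2 * t ^ 2 / 2) := by
      rw [QQ, integral_twoPoint (by linarith) hε0]
      have ha : τ - (τ - ε * σ) = ε * σ := by ring
      have hb : τ - σ - (τ - ε * σ) = (ε - 1) * σ := by ring
      simp only [ha, hb]
      exact mgf_two_point σ ε t hε0 hε1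
    filter_upwards [h] with p hp
    rw [← hp]
    exact hval

end AuxProof

/-- Proposition A.2: over the class `P_{Mon,d}(σ)` alone, no data-dependent selection set with
Type I error control can have worst-case expected regret smaller than `1 - α`. -/
theorem statement8 (d : ℕ) (hd : 0 < d) (τ σ : ℝ) (hσ : 0 < σ)
    (α : ℝ) (hα : α ∈ Set.Ioo (0 : ℝ) 1) (n : ℕ) (hn : 0 < n) :
    ENNReal.ofReal (1 - α) ≤
      ⨆ (P : Measure ((Fin d → ℝ) × ℝ)) (η : (Fin d → ℝ) → ℝ) (_ : PMon d σ P η),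
        ⨅ (A : (Fin n → (Fin d → ℝ) × ℝ) → Set (Fin d → ℝ))
            (_ : SelValid d n τ α (PMon d σ) A),
          ∫⁻ ω, (P.map Prod.fst) ({x | τ ≤ η x} \ A ω)
            ∂(Measure.pi fun _ : Fin n => P) := by
  obtain ⟨hα0, hα1⟩ := hα
  have hη0 : (fun _ : Fin d → ℝ => τ) = (fun _ => τ - 0 * σ) := by funext x; ring
  have hP0 : PMon d σ (QQ d τ σ 0) (fun _ => τ) := by
    rw [hη0]; exact QQ_PMon hσ le_rfl zero_le_one
  haveI hQ0prob : IsProbabilityMeasure (QQ d τ σ 0) := QQ_prob le_rfl zero_le_one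
  refine le_iSup_of_le (QQ d τ σ 0) (le_iSup_of_le (fun _ => τ) (le_iSup_of_le hP0 ?_))
  refine le_iInf fun A => le_iInf fun hA => ?_
  -- the deterministic dataset
  set p₀ : (Fin d → ℝ) × ℝ := ((0 : Fin d → ℝ), τ) with hp₀
  set ω₀ : Fin n → (Fin d → ℝ) × ℝ := fun _ => p₀ with hω₀
  -- key singleton computation for QQ d τ σ ε
  have hsingle : ∀ ε : ℝ, 0 ≤ ε → ε ≤ 1 →
      (Measure.pi fun _ : Fin n => QQ d τ σ ε) {ω₀} = ENNReal.ofReal ((1 - ε) ^ n) := by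
    intro ε hε0 hε1
    haveI : IsProbabilityMeasure (QQ d τ σ ε) := QQ_prob hε0 hε1
    have hset : ({ω₀} : Set (Fin n → (Fin d → ℝ) × ℝ)) = Set.pi Set.univ (fun _ => {p₀}) := by
      ext ω
      simp [funext_iff, Set.mem_pi, hω₀]
    have hQs : QQ d τ σ ε {p₀} = ENNReal.ofReal (1 - ε) := by
      have h1 : (Measure.dirac ((0 : Fin d → ℝ), τ)) {p₀} = 1 :=
        Measure.dirac_apply_of_mem rfl
      have h2 : (Measure.dirac ((0 : Fin d → ℝ), τ - σ)) {p₀} = 0 := by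
        rw [Measure.dirac_apply' _ (measurableSet_singleton p₀)]
        have : ((0 : Fin d → ℝ), τ - σ) ∉ ({p₀} : Set ((Fin d → ℝ) × ℝ)) := by
          simp only [Set.mem_singleton_iff, hp₀, Prod.mk.injEq]
          intro h
          have := h.2
          linarith
        simp [this]
      simp [QQ, h1, h2]
    rw [hset, Measure.pi_pi]
    simp [hQs, Finset.prod_const, ← ENNReal.ofReal_pow (by linarith : (0:ℝ) ≤ 1 - ε)]
  -- measurable selection event
  have hSmeas : MeasurableSet {ω : Fin n → (Fin d → ℝ) × ℝ | (0 : Fin d → ℝ) ∈ A ω} := by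
    have : {ω : Fin n → (Fin d → ℝ) × ℝ | (0 : Fin d → ℝ) ∈ A ω}
        = (fun ω => (ω, (0 : Fin d → ℝ))) ⁻¹' {q | q.2 ∈ A q.1} := rfl
    rw [this]
    exact (measurable_id.prodMk measurable_const) hA.1
  -- the procedure cannot select 0 at ω₀
  have hx0 : (0 : Fin d → ℝ) ∉ A ω₀ := by
    intro hmem
    set ε : ℝ := (1 - α) / (2 * n) with hε
    have hn' : (1 : ℝ) ≤ (n : ℝ) := by exact_mod_cast hn
    have hε0 : 0 < ε := by
      apply div_pos (by linarith) (by linarith)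
    have hε1 : ε ≤ 1 := by
      rw [hε, div_le_one (by linarith)]
      linarith
    haveI : IsProbabilityMeasure (QQ d τ σ ε) := QQ_prob hε0.le hε1
    haveI : ∀ i : Fin n, SigmaFinite (QQ d τ σ ε) := fun _ => inferInstance
    haveI : IsProbabilityMeasure (Measure.pi fun _ : Fin n => QQ d τ σ ε) := by infer_instance
    have hval := hA.2 (QQ d τ σ ε) (fun _ => τ - ε * σ) (QQ_PMon hσ hε0.le hε1)
    have hempty : {x : Fin d → ℝ | τ ≤ τ - ε * σ} = ∅ := by
      ext x
      simp only [Set.mem_setOf_eq, Set.mem_empty_iff_false, iff_false, not_le]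
      nlinarith
    rw [hempty] at hval
    have hsub : {ω : Fin n → (Fin d → ℝ) × ℝ | A ω ⊆ ∅}
        ⊆ {ω : Fin n → (Fin d → ℝ) × ℝ | (0 : Fin d → ℝ) ∈ A ω}ᶜ := by
      intro ω hω hmem'
      exact hω hmem'
    have hcompl : (Measure.pi fun _ : Fin n => QQ d τ σ ε)
        {ω | (0 : Fin d → ℝ) ∈ A ω}ᶜ
        = 1 - (Measure.pi fun _ : Fin n => QQ d τ σ ε) {ω | (0 : Fin d → ℝ) ∈ A ω} :=
      prob_compl_eq_one_sub hSmeas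
    have hSge : ENNReal.ofReal ((1 - ε) ^ n)
        ≤ (Measure.pi fun _ : Fin n => QQ d τ σ ε) {ω | (0 : Fin d → ℝ) ∈ A ω} := by
      rw [← hsingle ε hε0.le hε1]
      apply measure_mono
      intro ω hω
      rw [Set.mem_singleton_iff] at hω
      subst hω
      exact hmem
    have hBern : (1 + α) / 2 ≤ (1 - ε) ^ n := by
      have hb := one_add_mul_le_pow (by linarith : (-2 : ℝ) ≤ -ε) n
      have hne : (n : ℝ) ≠ 0 := by linarith
      have hnε : (n : ℝ) * ε = (1 - α) / 2 := by
        rw [hε]; field_simp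
      have : 1 + (n : ℝ) * (-ε) = (1 + α) / 2 := by
        rw [mul_neg, hnε]; ring
      calc (1 + α) / 2 = 1 + (n : ℝ) * (-ε) := this.symm
        _ ≤ (1 + -ε) ^ n := hb
        _ = (1 - ε) ^ n := by ring_nf
    have hfinal : ENNReal.ofReal (1 - α) ≤ ENNReal.ofReal ((1 - α) / 2) := by
      calc ENNReal.ofReal (1 - α)
          ≤ 1 - (Measure.pi fun _ : Fin n => QQ d τ σ ε) {ω | (0 : Fin d → ℝ) ∈ A ω} := by
            rw [← hcompl]; exact hval.trans (measure_mono hsub)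
        _ ≤ 1 - ENNReal.ofReal ((1 + α) / 2) := by
            apply tsub_le_tsub_left
            exact le_trans (ENNReal.ofReal_le_ofReal hBern) hSge
        _ = ENNReal.ofReal ((1 - α) / 2) := by
            rw [← ENNReal.ofReal_one, ← ENNReal.ofReal_sub _ (by linarith)]
            congr 1
            ring
    rw [ENNReal.ofReal_le_ofReal_iff (by linarith)] at hfinal
    linarith
  -- compute the regret at QQ d τ σ 0
  have hmap : (QQ d τ σ 0).map Prod.fst = Measure.dirac (0 : Fin d → ℝ) :=
    QQ_map_fst le_rfl zero_le_one
  have huniv : {x : Fin d → ℝ | τ ≤ τ} = Set.univ := by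
    ext x; simp
  rw [hmap]
  calc ENNReal.ofReal (1 - α) ≤ 1 := ENNReal.ofReal_le_one.mpr (by linarith)
    _ = ∫⁻ ω, Set.indicator {ω₀} (1 : ((Fin n → (Fin d → ℝ) × ℝ)) → ℝ≥0∞) ω
          ∂(Measure.pi fun _ : Fin n => QQ d τ σ 0) := by
        rw [lintegral_indicator_one (measurableSet_singleton ω₀), hsingle 0 le_rfl zero_le_one]
        norm_num
    _ ≤ ∫⁻ ω, Measure.dirac (0 : Fin d → ℝ) ({x | τ ≤ τ} \ A ω)
          ∂(Measure.pi fun _ : Fin n => QQ d τ σ 0) := by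
        apply lintegral_mono
        intro ω
        by_cases h : ω = ω₀
        · subst h
          have hmem : (0 : Fin d → ℝ) ∈ {x : Fin d → ℝ | τ ≤ τ} \ A ω₀ := ⟨show τ ≤ τ from le_rfl, hx0⟩
          show Set.indicator {ω₀} 1 ω₀ ≤ (Measure.dirac (0 : Fin d → ℝ)) ({x | τ ≤ τ} \ A ω₀)
          rw [Measure.dirac_apply_of_mem hmem]
          simp [Set.indicator]
        · show Set.indicator {ω₀} 1 ω ≤ (Measure.dirac (0 : Fin d → ℝ)) ({x | τ ≤ τ} \ A ω)
          simp [Set.indicator, h]
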